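/- Let p and q be two patterns. (1) If p induces q, then ad(p) ≤ ad(q). (2) If p and q are equivalent, then ad(p) = ad(q). -/

import Mathlib

/-- A numerical semigroup: an additive submonoid of ℕ with finite complement. -/
def IsNumericalSemigroup (S : Set ℕ) : Prop :=
  0 ∈ S ∧ (∀ a ∈ S, ∀ b ∈ S, a + b ∈ S) ∧ Sᶜ.Finite

/-- Evaluation of a pattern (list of coefficients a₁,…,aₙ) at s₁,…,sₙ. -/
def patEval (p : List ℤ) (s : ℕ → ℕ) : ℤ :=
  ∑ i ∈ Finset.range p.length, p.getD i 0 * (s i : ℤ)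

/-- `S` admits the pattern `p`: p(s₁,…,sₙ) ∈ S for all s₁ ≥ ⋯ ≥ sₙ in S. -/
def AdmitsPat (S : Set ℕ) (p : List ℤ) : Prop :=
  ∀ s : ℕ → ℕ, (∀ i, s i ∈ S) → (∀ i j, i ≤ j → s j ≤ s i) →
    ∃ m ∈ S, (m : ℤ) = patEval p s

/-- A pattern is admissible if it is admitted by some numerical semigroup. -/
def Admissible (p : List ℤ) : Prop :=
  ∃ S : Set ℕ, IsNumericalSemigroup S ∧ AdmitsPat S p

/-- The derivative p' of a pattern. -/
def pderiv : List ℤ → List ℤ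
  | [] => []
  | a :: q => if a = 1 then q else (a - 1) :: q

/-- The admissibility degree: least k such that p⁽ᵏ⁾ is not admissible, or ∞. -/
noncomputable def adDeg (p : List ℤ) : ℕ∞ :=
  sInf ((fun m : ℕ => (m : ℕ∞)) '' {m : ℕ | ¬ Admissible (pderiv^[m] p)})

/-- The partial sum bᵢ = a₁ + ⋯ + aᵢ of the coefficients of `p`. -/
def psum (p : List ℤ) (i : ℕ) : ℤ :=
  ∑ j ∈ Finset.range i, p.getD j 0

/-- p₁ induces p₂ if every numerical semigroup admitting p₁ also admits p₂. -/
def Induces (p q : List ℤ) : Prop :=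
  ∀ S : Set ℕ, IsNumericalSemigroup S → AdmitsPat S p → AdmitsPat S q

-- ====== auxiliary development ======

/-- partial sums strictly increase up to index i -/
def incrUpTo (p : List ℤ) (i : ℕ) : Prop :=
  ∀ j, 1 ≤ j → j ≤ i → psum p (j-1) < psum p j

/-- the combinatorial invariant: `pderiv^[k] p` is admissible -/
def Cc (p : List ℤ) (k : ℕ) : Prop :=
  ∀ i, 1 ≤ i → i ≤ p.length → incrUpTo p i ∨ ((k:ℤ) ≤ psum p i)

lemma psum_zero (p : List ℤ) : psum p 0 = 0 := by simp [psum]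

lemma psum_succ (p : List ℤ) (i : ℕ) : psum p (i+1) = psum p i + p.getD i 0 :=
  Finset.sum_range_succ _ _

lemma psum_cons_succ (a : ℤ) (t : List ℤ) (i : ℕ) :
    psum (a :: t) (i+1) = a + psum t i := by
  unfold psum
  rw [Finset.sum_range_succ']
  simp [add_comm]

lemma psum_stab (p : List ℤ) (i : ℕ) (h : p.length ≤ i) :
    psum p i = psum p p.length := by
  unfold psum
  rw [← Finset.sum_subset (Finset.range_subset_range.2 h)]
  intro x _ hx
  simp only [Finset.mem_range, not_lt] at hx
  exact List.getD_eq_default _ _ hx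

lemma incr_psum_ge {p : List ℤ} {i : ℕ} (h : incrUpTo p i) : (i:ℤ) ≤ psum p i := by
  induction i with
  | zero => simp [psum_zero]
  | succ n ih =>
    have h1 : incrUpTo p n := fun j hj1 hj2 => h j hj1 (by omega)
    have h2 := h (n+1) (by omega) le_rfl
    simp only [Nat.add_sub_cancel] at h2
    push_cast
    have := ih h1
    omega

lemma Cc_mono {p : List ℤ} {k k' : ℕ} (hkk : k' ≤ k) (h : Cc p k) : Cc p k' := by
  intro i h1 h2
  rcases h i h1 h2 with h | h
  · exact Or.inl h
  · right; have : (k':ℤ) ≤ k := by exact_mod_cast hkk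
    omega

lemma Cc_psum_nonneg {p : List ℤ} {k : ℕ} (h : Cc p k) :
    ∀ l, 1 ≤ l → l ≤ p.length → 0 ≤ psum p l := by
  intro l h1 h2
  rcases h l h1 h2 with hh | hh
  · have := incr_psum_ge hh; omega
  · have : (0:ℤ) ≤ (k:ℤ) := by positivity
    omega

lemma sum_ind (p : List ℤ) (i : ℕ) (hi : i ≤ p.length) :
    ∑ l ∈ Finset.range p.length, p.getD l 0 * (if l < i then (1:ℤ) else 0) = psum p i := by
  rw [← Finset.sum_subset (Finset.range_subset_range.2 hi)]
  · unfold psum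
    apply Finset.sum_congr rfl
    intro l hl
    simp [Finset.mem_range.1 hl]
  · intro x _ hx
    simp only [Finset.mem_range, not_lt] at hx
    simp [hx, if_neg (by omega : ¬ x < i)]

lemma sum_abel (f g : ℕ → ℤ) (n : ℕ) :
    ∑ i ∈ Finset.range n, (f (i+1) - f i) * g i
      = ∑ i ∈ Finset.range n, f (i+1) * (g i - g (i+1)) + f n * g n - f 0 * g 0 := by
  induction n with
  | zero => simp
  | succ n ih =>
    rw [Finset.sum_range_succ, Finset.sum_range_succ, ih]
    ring

def ztr (n : ℕ) (s : ℕ → ℕ) (i : ℕ) : ℤ := if i < n then (s i : ℤ) else 0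

lemma ztr_nonneg (n : ℕ) (s : ℕ → ℕ) (i : ℕ) : 0 ≤ ztr n s i := by
  unfold ztr; split <;> positivity

lemma ztr_anti {s : ℕ → ℕ} (hdec : ∀ i j, i ≤ j → s j ≤ s i) (n : ℕ)
    {i j : ℕ} (hij : i ≤ j) : ztr n s j ≤ ztr n s i := by
  unfold ztr
  by_cases h1 : j < n
  · rw [if_pos h1, if_pos (by omega)]
    exact_mod_cast hdec i j hij
  · rw [if_neg h1]
    split <;> positivity

lemma patEval_abel (p : List ℤ) (s : ℕ → ℕ) :
    patEval p s = ∑ i ∈ Finset.range p.length,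
      psum p (i+1) * (ztr p.length s i - ztr p.length s (i+1)) := by
  have h1 : patEval p s = ∑ i ∈ Finset.range p.length,
      (psum p (i+1) - psum p i) * ztr p.length s i := by
    unfold patEval
    apply Finset.sum_congr rfl
    intro i hi
    rw [psum_succ, ztr, if_pos (Finset.mem_range.1 hi)]
    ring
  rw [h1, sum_abel]
  simp [psum_zero, ztr]

lemma patEval_nil (s : ℕ → ℕ) : patEval [] s = 0 := by simp [patEval]

lemma patEval_cons (a : ℤ) (t : List ℤ) (s : ℕ → ℕ) :
    patEval (a :: t) s = a * (s 0 : ℤ) + patEval t (fun i => s (i+1)) := by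
  unfold patEval
  rw [List.length_cons, Finset.sum_range_succ']
  simp [add_comm]

lemma nsmul_add_mem {S : Set ℕ} (h0 : 0 ∈ S) (hadd : ∀ a ∈ S, ∀ b ∈ S, a + b ∈ S) :
    ∀ (k x y : ℕ), x ∈ S → y ∈ S → k * x + y ∈ S := by
  intro k
  induction k with
  | zero => intro x y _ hy; simpa using hy
  | succ n ih =>
    intro x y hx hy
    have : (n+1) * x + y = n * x + (x + y) := by ring
    rw [this]
    exact ih x (x+y) hx (hadd x hx y hy)

lemma combo {S : Set ℕ} (h0 : 0 ∈ S) (hadd : ∀ a ∈ S, ∀ b ∈ S, a + b ∈ S) :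
    ∀ (p : List ℤ) (s : ℕ → ℕ),
      (∀ i, i < p.length → 1 ≤ p.getD i 0 ∨ s i = 0) →
      (∀ i, s i ∈ S) →
      ∃ m ∈ S, (m : ℤ) = patEval p s := by
  intro p
  induction p with
  | nil => intro s _ _; exact ⟨0, h0, by simp [patEval_nil]⟩
  | cons a t ih =>
    intro s hcoef hs
    obtain ⟨m', hm', hm'eq⟩ := ih (fun i => s (i+1))
      (fun i hi => by
        rcases hcoef (i+1) (by simpa using Nat.succ_lt_succ hi) with h | h
        · left; simpa using h
        · right; exact h)
      (fun i => hs (i+1))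
    rcases hcoef 0 (by simp) with h | h
    · refine ⟨a.toNat * s 0 + m', nsmul_add_mem h0 hadd _ _ _ (hs 0) hm', ?_⟩
      rw [patEval_cons, ← hm'eq]
      push_cast
      have h' : (1:ℤ) ≤ a := by simpa using h
      rw [Int.toNat_of_nonneg (by omega)]
    · refine ⟨m', hm', ?_⟩
      rw [patEval_cons, ← hm'eq]
      simp [h]

-- the test semigroups
def SMb (M β : ℕ) : Set ℕ :=
  {x | x = 0 ∨ (β+1)*M ≤ x ∨ ∃ t, 1 ≤ t ∧ t*M ≤ x ∧ x ≤ t*M + t}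

lemma SMb_zero (M β : ℕ) : 0 ∈ SMb M β := Or.inl rfl

lemma SMb_add (M β : ℕ) : ∀ a ∈ SMb M β, ∀ b ∈ SMb M β, a + b ∈ SMb M β := by
  rintro a (rfl | ha | ⟨t, ht1, ht2, ht3⟩) b hb
  · simpa using hb
  · rcases hb with rfl | hb | ⟨u, hu1, hu2, hu3⟩
    · exact Or.inr (Or.inl (by simpa using ha))
    · exact Or.inr (Or.inl (by omega))
    · exact Or.inr (Or.inl (by omega))
  · rcases hb with rfl | hb | ⟨u, hu1, hu2, hu3⟩
    · exact Or.inr (Or.inr ⟨t, ht1, by omega, by omega⟩)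
    · exact Or.inr (Or.inl (by omega))
    · exact Or.inr (Or.inr ⟨t+u, by omega, by nlinarith, by nlinarith⟩)

lemma SMb_num (M β : ℕ) : IsNumericalSemigroup (SMb M β) := by
  refine ⟨SMb_zero M β, SMb_add M β, ?_⟩
  apply Set.Finite.subset (Set.finite_Iio ((β+1)*M))
  intro x hx
  simp only [Set.mem_compl_iff, SMb, Set.mem_setOf_eq, not_or] at hx
  exact lt_of_not_ge hx.2.1

lemma SMb_mem_M {M β : ℕ} (hM : 1 ≤ M) : M ∈ SMb M β :=
  Or.inr (Or.inr ⟨1, le_rfl, by omega, by omega⟩)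

lemma SMb_mem_M1 {M β : ℕ} (hM : 1 ≤ M) : M + 1 ∈ SMb M β :=
  Or.inr (Or.inr ⟨1, le_rfl, by omega, by omega⟩)

lemma SMb_pos_ge {M β x : ℕ} (hx : x ∈ SMb M β) (hx0 : x ≠ 0) : M ≤ x := by
  rcases hx with rfl | h | ⟨t, ht1, ht2, _⟩
  · omega
  · nlinarith
  · nlinarith

lemma univ_num : IsNumericalSemigroup (Set.univ : Set ℕ) :=
  ⟨trivial, fun _ _ _ _ => trivial, by simp⟩

lemma univ_admits (p : List ℤ) (h : ∀ l, 1 ≤ l → l ≤ p.length → 0 ≤ psum p l) :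
    AdmitsPat Set.univ p := by
  intro s _ hdec
  have hnn : 0 ≤ patEval p s := by
    rw [patEval_abel]
    apply Finset.sum_nonneg
    intro i hi
    have h1 : 0 ≤ psum p (i+1) := h (i+1) (by omega) (Finset.mem_range.1 hi)
    have h2 : ztr p.length s (i+1) ≤ ztr p.length s i := ztr_anti hdec _ (by omega)
    exact mul_nonneg h1 (by omega)
  exact ⟨(patEval p s).toNat, trivial, Int.toNat_of_nonneg hnn⟩

lemma admits_psum_nonneg {S : Set ℕ} (hS : IsNumericalSemigroup S) {p : List ℤ}
    (h : AdmitsPat S p) : ∀ i, 0 ≤ psum p i := by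
  obtain ⟨b, hb⟩ := hS.2.2.bddAbove
  have hxS : b + 1 ∈ S := by
    by_contra hc
    have := hb hc
    omega
  have main : ∀ i, i ≤ p.length → 0 ≤ psum p i := by
    intro i hi
    obtain ⟨m, _, hmeq⟩ := h (fun l => if l < i then b+1 else 0)
      (fun l => by split; exacts [hxS, hS.1])
      (fun l₁ l₂ h12 => by split <;> split <;> omega)
    have hcast : ∀ l : ℕ, ((if l < i then b+1 else 0 : ℕ) : ℤ)
        = ((b:ℤ)+1) * (if l < i then (1:ℤ) else 0) := by
      intro l; split <;> simp
    have : (m:ℤ) = ((b:ℤ)+1) * psum p i := by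
      rw [hmeq]
      unfold patEval
      rw [← sum_ind p i hi, Finset.mul_sum]
      apply Finset.sum_congr rfl
      intro l _
      rw [hcast l]
      ring
    by_contra hneg
    push_neg at hneg
    nlinarith [this, Int.ofNat_nonneg m]
  intro i
  by_cases hi : i ≤ p.length
  · exact main i hi
  · rw [psum_stab p i (by omega)]
    exact main _ le_rfl

lemma sum_tele (f : ℕ → ℤ) (a : ℕ) : ∀ b, a ≤ b →
    ∑ i ∈ Finset.Ico a b, (f i - f (i+1)) = f a - f b := by
  intro b
  induction b with
  | zero => intro h; interval_cases a; simp
  | succ n ih =>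
    intro h
    by_cases h2 : a ≤ n
    · rw [Finset.sum_Ico_succ_top h2, ih h2]; ring
    · have : a = n+1 := by omega
      subst this; simp

lemma adm_smb (M β : ℕ) (hM : 1 ≤ M) (r : List ℤ) (hc : Cc r (β+1)) :
    AdmitsPat (SMb M β) r := by
  classical
  intro s hs hdec
  by_cases hdesc : ∃ j, 1 ≤ j ∧ j ≤ r.length ∧ psum r j ≤ psum r (j-1)
  · set j := Nat.find hdesc with hjdef
    obtain ⟨hj1, hjn, hjd⟩ := Nat.find_spec hdesc
    rw [← hjdef] at hj1 hjn hjd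
    have hprefix : ∀ l, 1 ≤ l → l < j → psum r (l-1) < psum r l := by
      intro l h1 h2
      have := Nat.find_min hdesc h2
      rw [not_and_or, not_and_or] at this
      rcases this with h | h | h
      · omega
      · omega
      · omega
    by_cases hz : s (j-1) = 0
    · apply combo (SMb_zero M β) (SMb_add M β) r s ?_ hs
      intro i hi
      by_cases hij : i + 1 < j
      · left
        have := hprefix (i+1) (by omega) hij
        rw [psum_succ] at this
        simp only [Nat.add_sub_cancel] at this
        omega
      · right
        have := hdec (j-1) i (by omega)
        omega
    · have hsM : M ≤ s (j-1) := SMb_pos_ge (hs (j-1)) hz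
      have hge : ∀ l, j ≤ l → l ≤ r.length → ((β:ℤ)+1) ≤ psum r l := by
        intro l h1 h2
        rcases hc l (by omega) h2 with hinc | hk
        · exact absurd (hinc j hj1 h1) (by omega)
        · push_cast at hk; exact_mod_cast hk
      have hpnn : ∀ l, 1 ≤ l → l ≤ r.length → 0 ≤ psum r l := Cc_psum_nonneg hc
      have hjn' : j - 1 < r.length := by omega
      have key : ((β:ℤ)+1) * (s (j-1)) ≤ patEval r s := by
        rw [patEval_abel]
        have step1 : ∑ i ∈ Finset.range r.length,
            (if j-1 ≤ i then ((β:ℤ)+1) * (ztr r.length s i - ztr r.length s (i+1)) else 0)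
            ≤ ∑ i ∈ Finset.range r.length,
              psum r (i+1) * (ztr r.length s i - ztr r.length s (i+1)) := by
          apply Finset.sum_le_sum
          intro i hi
          have hd : 0 ≤ ztr r.length s i - ztr r.length s (i+1) := by
            have := ztr_anti hdec r.length (by omega : i ≤ i+1)
            omega
          split
          · apply mul_le_mul_of_nonneg_right _ hd
            exact hge (i+1) (by omega) (Finset.mem_range.1 hi)
          · exact mul_nonneg (hpnn (i+1) (by omega) (Finset.mem_range.1 hi)) hd
        have hfil : Finset.filter (fun i => j-1 ≤ i) (Finset.range r.length)
            = Finset.Ico (j-1) r.length := by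
          ext x
          simp only [Finset.mem_filter, Finset.mem_range, Finset.mem_Ico]
          omega
        have step2 : ∑ i ∈ Finset.range r.length,
            (if j-1 ≤ i then ((β:ℤ)+1) * (ztr r.length s i - ztr r.length s (i+1)) else 0)
            = ((β:ℤ)+1) * (s (j-1)) := by
          rw [Finset.sum_ite, Finset.sum_const_zero, add_zero, hfil, ← Finset.mul_sum,
            sum_tele (ztr r.length s) (j-1) r.length (by omega)]
          have h1 : ztr r.length s (j-1) = (s (j-1) : ℤ) := if_pos hjn'
          have h2 : ztr r.length s r.length = 0 := if_neg (by omega)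
          rw [h1, h2]
          ring
        calc ((β:ℤ)+1) * (s (j-1)) = _ := step2.symm
          _ ≤ _ := step1
      have hnn : 0 ≤ patEval r s := le_trans (by positivity) key
      refine ⟨(patEval r s).toNat, Or.inr (Or.inl ?_), Int.toNat_of_nonneg hnn⟩
      have : ((β:ℤ)+1) * M ≤ ((β:ℤ)+1) * (s (j-1)) := by
        apply mul_le_mul_of_nonneg_left _ (by positivity)
        exact_mod_cast hsM
      have h3 : (((β+1)*M : ℕ) : ℤ) ≤ patEval r s := by push_cast; linarith
      exact_mod_cast (Int.le_toNat hnn).2 h3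
  · push_neg at hdesc
    apply combo (SMb_zero M β) (SMb_add M β) r s ?_ hs
    intro i hi
    left
    have := hdesc (i+1) (by omega) (by omega)
    rw [psum_succ] at this
    simp only [Nat.add_sub_cancel] at this
    omega

lemma kill (q : List ℤ) (j i : ℕ) (β D : ℤ)
    (hj2 : 2 ≤ j) (hji : j ≤ i) (hin : i ≤ q.length)
    (hβ0 : 0 ≤ β) (hβi : psum q i = β) (hD : psum q (j-1) = D) (hβD : β + 1 ≤ D) :
    ¬ AdmitsPat (SMb (D.toNat + 1) β.toNat) q := by
  intro hadm
  set M := D.toNat + 1 with hMdef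
  have hMz : (M:ℤ) = D + 1 := by
    rw [hMdef]
    push_cast
    rw [Int.toNat_of_nonneg (by omega)]
  have hM1 : 1 ≤ M := by omega
  set s : ℕ → ℕ := fun l => if l < j-1 then M+1 else if l < i then M else 0 with hsdef
  have hs : ∀ l, s l ∈ SMb M β.toNat := by
    intro l
    rw [hsdef]
    dsimp only
    split
    · exact SMb_mem_M1 hM1
    · split
      · exact SMb_mem_M hM1
      · exact SMb_zero M β.toNat
  have hdec : ∀ l₁ l₂, l₁ ≤ l₂ → s l₂ ≤ s l₁ := by
    intro l₁ l₂ h12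
    rw [hsdef]
    dsimp only
    split_ifs <;> omega
  obtain ⟨m, hm, hmeq⟩ := hadm s hs hdec
  have hsl : ∀ l, ((s l : ℕ):ℤ)
      = (M:ℤ) * (if l < i then (1:ℤ) else 0) + (if l < j-1 then (1:ℤ) else 0) := by
    intro l
    rw [hsdef]
    dsimp only
    by_cases h1 : l < j-1
    · have h2 : l < i := by omega
      rw [if_pos h1, if_pos h1, if_pos h2]
      push_cast; ring
    · by_cases h2 : l < i
      · rw [if_neg h1, if_pos h2, if_neg h1, if_pos h2]
        push_cast; ring
      · rw [if_neg h1, if_neg h2, if_neg h1, if_neg h2]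
        push_cast; ring
  have hval : patEval q s = (M:ℤ) * β + D := by
    unfold patEval
    have : ∀ l ∈ Finset.range q.length, q.getD l 0 * ((s l : ℕ):ℤ)
        = (M:ℤ) * (q.getD l 0 * (if l < i then (1:ℤ) else 0))
          + q.getD l 0 * (if l < j-1 then (1:ℤ) else 0) := by
      intro l _
      rw [hsl l]; ring
    rw [Finset.sum_congr rfl this, Finset.sum_add_distrib, ← Finset.mul_sum,
      sum_ind q i hin, sum_ind q (j-1) (by omega), hβi, hD]
  rw [hval] at hmeq
  have hmnn : (0:ℤ) ≤ m := Int.ofNat_nonneg m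
  rcases hm with h | h | ⟨t, ht1, ht2, ht3⟩
  · subst h
    push_cast at hmeq
    nlinarith [hMz]
  · have h' : (((β.toNat+1)*M : ℕ):ℤ) ≤ (m:ℤ) := by exact_mod_cast h
    push_cast at h'
    rw [Int.toNat_of_nonneg hβ0] at h'
    nlinarith [hMz]
  · have ht2' : ((t:ℤ))*(M:ℤ) ≤ (m:ℤ) := by exact_mod_cast ht2
    have ht3' : (m:ℤ) ≤ (t:ℤ)*(M:ℤ) + t := by exact_mod_cast ht3
    have ht1' : (1:ℤ) ≤ t := by exact_mod_cast ht1
    have htβ : (t:ℤ) ≤ β := by nlinarith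
    nlinarith

lemma key (p q : List ℤ) (hq : ∀ a ∈ q, a ≠ 0) (hind : Induces p q) (k : ℕ)
    (hCp : Cc p k) : Cc q k := by
  classical
  by_contra hc
  unfold Cc at hc
  push_neg at hc
  obtain ⟨i₀, hi₀1, hi₀n, hni₀, hki₀⟩ := hc
  set F := Finset.filter (fun i => ¬ incrUpTo q i) (Finset.Icc 1 q.length) with hFdef
  have hF0 : i₀ ∈ F := by
    rw [hFdef, Finset.mem_filter, Finset.mem_Icc]
    exact ⟨⟨hi₀1, hi₀n⟩, hni₀⟩
  obtain ⟨i, hiF, himin⟩ := Finset.exists_min_image F (psum q) ⟨i₀, hF0⟩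
  rw [hFdef, Finset.mem_filter, Finset.mem_Icc] at hiF
  obtain ⟨⟨hi1, hin⟩, hinc⟩ := hiF
  set β := psum q i with hβdef
  have hβk : β < (k:ℤ) := lt_of_le_of_lt (himin i₀ hF0) hki₀
  by_cases hβ0 : β < 0
  · have hadm_p := univ_admits p (Cc_psum_nonneg hCp)
    have hadm_q := hind _ univ_num hadm_p
    have := admits_psum_nonneg univ_num hadm_q i
    omega
  · push_neg at hβ0
    have hq1 : 1 ≤ q.length := le_trans hi1 hin
    have hd : ∃ jx, 1 ≤ jx ∧ jx ≤ i ∧ psum q jx ≤ psum q (jx-1) := by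
      unfold incrUpTo at hinc
      push_neg at hinc
      obtain ⟨jx, h1, h2, h3⟩ := hinc
      exact ⟨jx, h1, h2, h3⟩
    set j := Nat.find hd with hjdef
    obtain ⟨hj1, hji, hjd⟩ := Nat.find_spec hd
    rw [← hjdef] at hj1 hji hjd
    have hjn : j ≤ q.length := le_trans hji hin
    have hjnotincr : ¬ incrUpTo q j := by
      intro hcon
      exact absurd (hcon j hj1 le_rfl) (not_lt.2 hjd)
    have hjF : j ∈ F := by
      rw [hFdef, Finset.mem_filter, Finset.mem_Icc]
      exact ⟨⟨hj1, hjn⟩, hjnotincr⟩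
    have hβj : β ≤ psum q j := himin j hjF
    have hgetD : ∀ l, l < q.length → q.getD l 0 ≠ 0 := by
      intro l hl
      rw [List.getD_eq_getElem _ _ hl]
      exact hq _ (List.getElem_mem hl)
    have hj2 : 2 ≤ j := by
      by_contra hcon
      have hj1' : j = 1 := by omega
      rw [hj1'] at hjd
      rw [psum_zero] at hjd
      have h1 : psum q 1 = q.getD 0 0 := by
        rw [show (1:ℕ) = 0 + 1 from rfl, psum_succ, psum_zero, zero_add]
      have h2 : q.getD 0 0 ≠ 0 := hgetD 0 (by omega)
      have h1F : (1:ℕ) ∈ F := by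
        rw [hFdef, Finset.mem_filter, Finset.mem_Icc]
        refine ⟨⟨le_rfl, hq1⟩, ?_⟩
        intro hcon2
        have := hcon2 1 le_rfl le_rfl
        rw [psum_zero] at this
        omega
      have := himin 1 h1F
      omega
    have hprefix : ∀ l, 1 ≤ l → l < j → psum q (l-1) < psum q l := by
      intro l h1 h2
      have := Nat.find_min hd h2
      rw [not_and_or, not_and_or] at this
      rcases this with h | h | h
      · omega
      · omega
      · omega
    have hD1 : 1 ≤ psum q (j-1) := by
      have hup : incrUpTo q (j-1) := fun l hl1 hl2 => hprefix l hl1 (by omega)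
      have := incr_psum_ge hup
      omega
    have hstr : psum q j ≤ psum q (j-1) - 1 := by
      have heq : psum q ((j-1)+1) = psum q (j-1) + q.getD (j-1) 0 := psum_succ q (j-1)
      rw [show j - 1 + 1 = j by omega] at heq
      have hne := hgetD (j-1) (by omega)
      omega
    have hβD : β + 1 ≤ psum q (j-1) := by omega
    have hCpk' : Cc p (β.toNat + 1) := Cc_mono (by omega) hCp
    have hadm_p := adm_smb ((psum q (j-1)).toNat + 1) β.toNat (by omega) p hCpk'
    have hadm_q := hind _ (SMb_num _ _) hadm_p
    exact kill q j i β (psum q (j-1)) hj2 hji hin hβ0 hβdef.symm rfl hβD hadm_q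

lemma incr_cons (a : ℤ) (t : List ℤ) (i : ℕ) :
    incrUpTo (a :: t) (i+1) ↔ (0 < a ∧ incrUpTo t i) := by
  constructor
  · intro h
    constructor
    · have := h 1 le_rfl (by omega)
      rw [show (1:ℕ)-1 = 0 from rfl, psum_zero, show (1:ℕ) = 0+1 from rfl,
        psum_cons_succ, psum_zero] at this
      omega
    · intro j hj1 hj2
      have := h (j+1) (by omega) (by omega)
      obtain ⟨j', rfl⟩ : ∃ j', j = j'+1 := ⟨j-1, by omega⟩
      rw [show j'+1+1-1 = j'+1 from rfl, psum_cons_succ, psum_cons_succ] at this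
      rw [show j'+1-1 = j' from rfl]
      omega
  · rintro ⟨ha, h⟩ j hj1 hj2
    obtain ⟨j', rfl⟩ : ∃ j', j = j'+1 := ⟨j-1, by omega⟩
    rw [show j'+1-1 = j' from rfl, psum_cons_succ]
    rcases Nat.eq_zero_or_pos j' with h0 | hpos
    · subst h0
      rw [psum_zero, psum_zero]
      omega
    · obtain ⟨j'', rfl⟩ : ∃ j'', j' = j''+1 := ⟨j'-1, by omega⟩
      rw [psum_cons_succ]
      have := h (j''+1) (by omega) (by omega)
      rw [show j''+1-1 = j'' from rfl] at this
      omega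

lemma incrUpTo_zero (t : List ℤ) : incrUpTo t 0 := by
  intro j h1 h2; omega

lemma tl_one (t : List ℤ) (k : ℕ) : Cc t k ↔ Cc ((1:ℤ) :: t) (k+1) := by
  constructor
  · intro h i hi1 hi2
    obtain ⟨i', rfl⟩ : ∃ i', i = i'+1 := ⟨i-1, by omega⟩
    rcases Nat.eq_zero_or_pos i' with h0 | hpos
    · subst h0
      exact Or.inl ((incr_cons 1 t 0).2 ⟨one_pos, incrUpTo_zero t⟩)
    · simp only [List.length_cons] at hi2
      rcases h i' hpos (by omega) with hin | hps
      · exact Or.inl ((incr_cons 1 t i').2 ⟨one_pos, hin⟩)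
      · right
        rw [psum_cons_succ]
        push_cast
        omega
  · intro h i hi1 hi2
    rcases h (i+1) (by omega) (by simp only [List.length_cons]; omega) with hin | hps
    · exact Or.inl ((incr_cons 1 t i).1 hin).2
    · right
      rw [psum_cons_succ] at hps
      push_cast at hps ⊢
      omega

lemma tl_ne (a : ℤ) (ha : a ≠ 1) (t : List ℤ) (k : ℕ) :
    Cc ((a-1) :: t) k ↔ Cc (a :: t) (k+1) := by
  have hincr : ∀ i, incrUpTo ((a-1) :: t) (i+1) ↔ incrUpTo (a :: t) (i+1) := by
    intro i
    rw [incr_cons, incr_cons]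
    constructor
    · rintro ⟨h1, h2⟩; exact ⟨by omega, h2⟩
    · rintro ⟨h1, h2⟩; exact ⟨by omega, h2⟩
  constructor
  · intro h i hi1 hi2
    simp only [List.length_cons] at hi2
    obtain ⟨i', rfl⟩ : ∃ i', i = i'+1 := ⟨i-1, by omega⟩
    rcases h (i'+1) (by omega) (by simp only [List.length_cons]; omega) with hin | hps
    · exact Or.inl ((hincr i').1 hin)
    · right
      rw [psum_cons_succ] at hps
      rw [psum_cons_succ]
      push_cast at hps ⊢
      omega
  · intro h i hi1 hi2
    simp only [List.length_cons] at hi2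
    obtain ⟨i', rfl⟩ : ∃ i', i = i'+1 := ⟨i-1, by omega⟩
    rcases h (i'+1) (by omega) (by simp only [List.length_cons]; omega) with hin | hps
    · exact Or.inl ((hincr i').2 hin)
    · right
      rw [psum_cons_succ] at hps
      rw [psum_cons_succ]
      push_cast at hps ⊢
      omega

lemma tl (p : List ℤ) (k : ℕ) : Cc (pderiv p) k ↔ Cc p (k+1) := by
  cases p with
  | nil =>
    rw [show pderiv ([] : List ℤ) = [] from rfl]
    constructor <;> intro _ i h1 h2 <;> simp only [List.length_nil] at h2 <;> omega
  | cons a t =>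
    by_cases ha : a = 1
    · subst ha
      rw [show pderiv (1 :: t) = t by simp [pderiv]]
      exact tl_one t k
    · rw [show pderiv (a :: t) = (a-1) :: t by simp [pderiv, ha]]
      exact tl_ne a ha t k

lemma char : ∀ (k : ℕ) (p : List ℤ), Admissible (pderiv^[k] p) ↔ Cc p k := by
  intro k
  induction k with
  | zero =>
    intro p
    simp only [Function.iterate_zero, id]
    constructor
    · rintro ⟨S, hS, hadm⟩ i hi1 hi2
      right
      have := admits_psum_nonneg hS hadm i
      exact_mod_cast this
    · intro h
      exact ⟨Set.univ, univ_num, univ_admits p (Cc_psum_nonneg h)⟩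
  | succ k ih =>
    intro p
    rw [Function.iterate_succ_apply, ih (pderiv p)]
    exact tl p k


/-- (1) If p induces q then ad(p) ≤ ad(q); (2) if p and q are equivalent then
ad(p) = ad(q). -/
theorem stmt_10 (p q : List ℤ) (hp : ∀ a ∈ p, a ≠ 0) (hq : ∀ a ∈ q, a ≠ 0) :
    (Induces p q → adDeg p ≤ adDeg q) ∧
    (Induces p q ∧ Induces q p → adDeg p = adDeg q) := by
  have main : ∀ p' q' : List ℤ, (∀ a ∈ q', a ≠ 0) → Induces p' q' → adDeg p' ≤ adDeg q' := by
    intro p' q' hq' hind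
    unfold adDeg
    apply sInf_le_sInf
    intro x hx
    obtain ⟨m, hm, rfl⟩ := hx
    refine ⟨m, ?_, rfl⟩
    simp only [Set.mem_setOf_eq, char] at hm ⊢
    exact fun hCp => hm (key p' q' hq' hind m hCp)
  exact ⟨main p q hq, fun ⟨h1, h2⟩ => le_antisymm (main p q hq h1) (main q p hp h2)⟩
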